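/- Let G be a finite abelian group of order coprime to p, with minimal number of generators d. Then G is isomorphic to a quotient of a direct product (F_p[t]/M_1)^× × ⋯ × (F_p[t]/M_d)^× for some pairwise distinct monic irreducible polynomials M_1, …, M_d ∈ F_p[t]. -/

import Mathlib

open Polynomial

/-- An irreducible monic polynomial of any positive degree exists over `ZMod p`. -/
lemma exists_monic_irreducible_of_degree (p m : ℕ) [Fact p.Prime] (hm : m ≠ 0) :
    ∃ M : Polynomial (ZMod p), M.Monic ∧ Irreducible M ∧ M.natDegree = m := by
  obtain ⟨α, hα⟩ := Field.exists_primitive_element_of_finite_top (ZMod p) (GaloisField p m)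
  have hint : IsIntegral (ZMod p) α := IsIntegral.of_finite _ _
  refine ⟨minpoly (ZMod p) α, minpoly.monic hint, minpoly.irreducible hint, ?_⟩
  have h1 := IntermediateField.adjoin.finrank hint
  rw [hα, IntermediateField.finrank_top', GaloisField.finrank p hm] at h1
  exact h1.symm

/-- A hom from a finite cyclic group hitting a given element whose order divides the card. -/
lemma exists_monoidHom_of_isCyclic {H G : Type*} [Group H] [Finite H] [IsCyclic H]
    [Group G] (g : G) (hdvd : orderOf g ∣ Nat.card H) :
    ∃ φ : H →* G, g ∈ Set.range φ := by
  set n := Nat.card H with hn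
  have hgn : ((n : ℤ) • Additive.ofMul g) = 0 := by
    have : g ^ n = 1 := orderOf_dvd_iff_pow_eq_one.mp hdvd
    simpa [← ofMul_pow] using congrArg Additive.ofMul this
  let f : ZMod n →+ Additive G := ZMod.lift n ⟨zmultiplesHom (Additive G) (Additive.ofMul g),
    by simpa using hgn⟩
  let ψ : Multiplicative (ZMod n) →* G := AddMonoidHom.toMultiplicativeLeft f
  let e : Multiplicative (ZMod n) ≃* H := zmodCyclicMulEquiv (by infer_instance)
  refine ⟨ψ.comp e.symm.toMonoidHom, ⟨e (Multiplicative.ofAdd (1 : ZMod n)), ?_⟩⟩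
  have h1 : ψ (Multiplicative.ofAdd (1 : ZMod n)) = g := by
    show Additive.toMul (f (1 : ZMod n)) = g
    have : ((1 : ℤ) : ZMod n) = (1 : ZMod n) := by push_cast; rfl
    rw [← this, ZMod.lift_coe]
    simp
  simpa [MulEquiv.symm_apply_apply] using h1

theorem abelian_group_quotient_of_units_product (p : ℕ) [Fact p.Prime]
    (G : Type*) [CommGroup G] [Fintype G] (hcop : Nat.Coprime (Fintype.card G) p) :
    ∃ M : Fin (Group.rank G) → Polynomial (ZMod p),
      (∀ i, (M i).Monic ∧ Irreducible (M i)) ∧ Function.Injective M ∧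
      ∃ φ : (∀ i, (Polynomial (ZMod p) ⧸ Ideal.span {M i})ˣ) →* G,
        Function.Surjective φ := by
  classical
  set N := Fintype.card G with hNdef
  have hN : 0 < N := Fintype.card_pos
  -- degrees
  set m : Fin (Group.rank G) → ℕ := fun i => (i + 1) * N.totient with hm
  have hmne : ∀ i, m i ≠ 0 := fun i =>
    Nat.mul_ne_zero (Nat.succ_ne_zero i) (Nat.totient_pos.mpr hN).ne'
  have hdvd : ∀ i, N ∣ p ^ m i - 1 := by
    intro i
    have h1 : p ^ N.totient ≡ 1 [MOD N] := Nat.ModEq.pow_totient hcop.symm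
    have h2 : p ^ m i ≡ 1 [MOD N] := by
      have := h1.pow (i + 1)
      simpa [hm, ← pow_mul, mul_comm] using this
    have hple : 1 ≤ p ^ m i := Nat.one_le_pow _ _ (Fact.out : p.Prime).pos
    exact (Nat.modEq_iff_dvd' hple).mp h2.symm
  -- polynomials
  choose M hM using fun i => exists_monic_irreducible_of_degree p (m i) (hmne i)
  have hMinj : Function.Injective M := by
    intro i j hij
    have : m i = m j := by rw [← (hM i).2.2, ← (hM j).2.2, hij]
    have : (i : ℕ) = (j : ℕ) := by
      have ht : 0 < N.totient := Nat.totient_pos.mpr hN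
      exact Nat.succ_injective (Nat.eq_of_mul_eq_mul_right ht this)
    exact Fin.ext this
  refine ⟨M, fun i => ⟨(hM i).1, (hM i).2.1⟩, hMinj, ?_⟩
  -- generators
  obtain ⟨S, hScard, hSclos⟩ := Group.rank_spec G
  let eS : Fin (Group.rank G) ≃ {x // x ∈ S} := (Fintype.equivFinOfCardEq (by simpa using hScard)).symm
  let g : Fin (Group.rank G) → G := fun i => (eS i : G)
  -- quotient fields
  have hfield : ∀ i, ∃ φi : (Polynomial (ZMod p) ⧸ Ideal.span {M i})ˣ →* G,
      g i ∈ Set.range φi := by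
    intro i
    have hirr := (hM i).2.1
    letI : (Ideal.span {M i}).IsMaximal := PrincipalIdealRing.isMaximal_of_irreducible hirr
    letI : Field (Polynomial (ZMod p) ⧸ Ideal.span {M i}) := Ideal.Quotient.field _
    -- identify with AdjoinRoot
    have hQ : Module.finrank (ZMod p) (Polynomial (ZMod p) ⧸ Ideal.span {M i}) = m i := by
      have h2 := (AdjoinRoot.powerBasis (K := ZMod p) (f := M i) hirr.ne_zero).finrank
      rw [AdjoinRoot.powerBasis_dim] at h2
      rw [← (hM i).2.2]
      exact h2
    haveI : Module.Finite (ZMod p) (Polynomial (ZMod p) ⧸ Ideal.span {M i}) :=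
      (AdjoinRoot.powerBasis (K := ZMod p) (f := M i) hirr.ne_zero).finite
    haveI : Finite (Polynomial (ZMod p) ⧸ Ideal.span {M i}) :=
      Module.finite_of_finite (ZMod p)
    letI : Fintype (Polynomial (ZMod p) ⧸ Ideal.span {M i}) := Fintype.ofFinite _
    have hcard : Fintype.card (Polynomial (ZMod p) ⧸ Ideal.span {M i}) = p ^ m i := by
      rw [Module.card_eq_pow_finrank (K := ZMod p), hQ, ZMod.card]
    haveI : IsCyclic (Polynomial (ZMod p) ⧸ Ideal.span {M i})ˣ := by infer_instance
    apply exists_monoidHom_of_isCyclic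
    have hcardu : Nat.card (Polynomial (ZMod p) ⧸ Ideal.span {M i})ˣ = p ^ m i - 1 := by
      rw [Nat.card_eq_fintype_card, Fintype.card_units, hcard]
    rw [hcardu]
    exact dvd_trans (orderOf_dvd_card) (hdvd i)
  choose φi hφi using hfield
  refine ⟨MonoidHom.noncommPiCoprod φi (show Pairwise _ from fun i j _ x y => Commute.all _ _), ?_⟩
  rw [← MonoidHom.range_eq_top]
  rw [MonoidHom.noncommPiCoprod_range]
  rw [← top_le_iff, ← hSclos, Subgroup.closure_le]
  intro s hs
  obtain ⟨i, hi⟩ := eS.surjective ⟨s, hs⟩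
  obtain ⟨x, hx⟩ := hφi i
  have : s = g i := by simp [g, hi]
  rw [this]
  exact Subgroup.mem_iSup_of_mem i ⟨x, hx⟩
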